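/- For every positive integer n, S(n) ≥ V(n)/3, where S(n) = ∑_{i ∈ A(n)} α_i(n)/2^{i+1}, A(n) is the set of indices of digit changes of n, α_i(n) = |∑_{k=0}^{i−1} n_k 2^k − n_i 2^i|, and V(n) = n_0 + ∑_{k≥1} |n_k − n_{k−1}| is the binary variation of n. -/

import Mathlib

open MeasureTheory Finset

noncomputable section

/-- The dyadic group: countable product of ℤ/2. -/
abbrev G := ℕ → ZMod 2

/-- Binary digits of a real number, as an element of the dyadic group. -/
def toG (x : ℝ) : G := fun n => ((⌊x * 2 ^ (n + 1)⌋ : ℤ) : ZMod 2)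

/-- Haar (product) measure on the dyadic group, realized as the pushforward
of Lebesgue measure on `[0,1)` under the binary digit map. -/
def muG : Measure G := (volume.restrict (Set.Ico (0:ℝ) 1)).map toG

/-- Walsh–Paley functions. -/
def walsh (m : ℕ) (x : G) : ℝ :=
  ∏ k ∈ Finset.range m, if m.testBit k then (-1 : ℝ) ^ ((x k).val) else 1

/-- Walsh–Dirichlet kernel. -/
def Dir (n : ℕ) (x : G) : ℝ := ∑ k ∈ Finset.range n, walsh k x

/-- Dyadic interval `I_n` of rank `n` about `0`. -/
def Iset (n : ℕ) : Set G := {x | ∀ i < n, x i = 0}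

/-- `k`-th binary digit of `n`, as a natural number. -/
def bit (n k : ℕ) : ℕ := (n.testBit k).toNat

/-- `α_i(n) = |∑_{k<i} n_k 2^k − n_i 2^i|`. -/
def alpha (n i : ℕ) : ℤ :=
  |(∑ k ∈ Finset.range i, (bit n k : ℤ) * 2 ^ k) - (bit n i : ℤ) * 2 ^ i|

/-- Binary variation `V(n) = n_0 + ∑_{k≥1} |n_k − n_{k−1}|`. -/
def V (n : ℕ) : ℕ :=
  bit n 0 + ∑ k ∈ Finset.range n, if n.testBit (k+1) ≠ n.testBit k then 1 else 0

/-- `A(n)`: indices where consecutive binary digits differ (with `n_{−1} = 0`). -/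
def Aset (n : ℕ) : Finset ℕ :=
  (Finset.range (n+1)).filter
    (fun i => if i = 0 then n.testBit 0 else n.testBit i ≠ n.testBit (i-1))

/-- `S(n) = ∑_{i ∈ A(n)} α_i(n)/2^{i+1}`. -/
def S (n : ℕ) : ℝ := ∑ i ∈ Aset n, (alpha n i : ℝ) / 2 ^ (i+1)

/-- `j`-th binary digit of a real number `t ∈ [0,1)`. -/
def tdig (t : ℝ) (j : ℕ) : ℕ := (⌊t * 2 ^ (j+1)⌋ % 2).toNat

/-- `m = ∑_{i=0}^{N-1} t_{i+1} 2^i`. -/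
def mOf (t : ℝ) (N : ℕ) : ℕ := ∑ i ∈ Finset.range N, tdig t (i+1) * 2 ^ i

/-- Conjugate Walsh–Dirichlet kernel
`D̃_n^{(t)} = D_n − 2 w_m D_m − 2 t_{N+1}(D_n − D_{2^N})` where `m = mOf t N`. -/
def Dconj (t : ℝ) (N n : ℕ) (x : G) : ℝ :=
  Dir n x - 2 * walsh (mOf t N) x * Dir (mOf t N) x
    - 2 * (tdig t (N+1) : ℝ) * (Dir n x - Dir (2^N) x)

/-- Lebesgue constant of the conjugate transform. -/
def Leb (t : ℝ) (N n : ℕ) : ℝ := ∫ x, |Dconj t N n x| ∂muG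

/-- `T(a,b) = {i : 1 ≤ i ≤ N−1, a_i ≠ a_{i−1}, b_i = b_{i−1}}`. -/
def Tset (N a b : ℕ) : Finset ℕ :=
  (Finset.Icc 1 (N-1)).filter
    (fun i => a.testBit i ≠ a.testBit (i-1) ∧ b.testBit i = b.testBit (i-1))

/-! ### Auxiliary lemmas for `S_ge_V_div_three` -/

lemma bit_eq_div_mod (n k : ℕ) : bit n k = n / 2 ^ k % 2 := by
  have := Nat.testBit_eq_decide_div_mod_eq (x := n) (i := k)
  rcases Nat.mod_two_eq_zero_or_one (n / 2 ^ k) with h | h <;> simp [bit, this, h]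

lemma sum_bits (n : ℕ) : ∀ i : ℕ, ∑ k ∈ Finset.range i, bit n k * 2 ^ k = n % 2 ^ i := by
  intro i
  induction i with
  | zero => simp [Nat.mod_one]
  | succ i ih =>
    rw [Finset.sum_range_succ, ih, bit_eq_div_mod]
    have h1 : n % 2 ^ (i+1) = n % 2 ^ i + 2 ^ i * (n / 2 ^ i % 2) := by
      conv_lhs => rw [pow_succ, Nat.mod_mul]
    rw [h1]; ring

lemma alpha_eq_mod (n i : ℕ) :
    alpha n i = |((n % 2 ^ i : ℕ) : ℤ) - (bit n i : ℤ) * 2 ^ i| := by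
  unfold alpha
  rw [← sum_bits n i]
  push_cast
  ring_nf

/-- The predicate defining `Aset`. -/
def APred (n i : ℕ) : Prop :=
  if i = 0 then n.testBit 0 = true else n.testBit i ≠ n.testBit (i-1)

lemma mem_Aset {n i : ℕ} : i ∈ Aset n ↔ i < n + 1 ∧ APred n i := by
  simp [Aset, APred, Finset.mem_filter, Finset.mem_range]

lemma two_pow_le_of_testBit {n j : ℕ} (h : n.testBit j = true) : 2 ^ j ≤ n := by
  by_contra hlt
  rw [Nat.testBit_eq_false_of_lt (by omega)] at h
  exact Bool.false_ne_true h

lemma APred_le {n i : ℕ} (h : APred n i) : i ≤ n := by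
  unfold APred at h
  rcases Nat.eq_zero_or_pos i with rfl | hi
  · simp at h
    exact Nat.zero_le n
  · rw [if_neg hi.ne'] at h
    have key : 2 ^ (i - 1) ≤ n := by
      by_cases hb : n.testBit (i-1) = true
      · exact two_pow_le_of_testBit hb
      · have hb' : n.testBit i = true := by
          cases hni : n.testBit i
          · exact absurd (hni.trans (by simp [Bool.not_eq_true] at hb; rw [hb])) h
          · rfl
        calc 2 ^ (i-1) ≤ 2 ^ i := Nat.pow_le_pow_right (by norm_num) (by omega)
          _ ≤ n := two_pow_le_of_testBit hb'
    have : i - 1 < 2 ^ (i - 1) := Nat.lt_two_pow_self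
    omega

lemma mem_Aset_lt {q a i : ℕ} (hq2 : 2 * q < 2 ^ a) (hi : i ∈ Aset q) : i < a := by
  rw [mem_Aset] at hi
  obtain ⟨-, hp⟩ := hi
  have hsmall : ∀ j, a ≤ j + 1 → q.testBit j = false := by
    intro j hj
    apply Nat.testBit_eq_false_of_lt
    have : 2 ^ a ≤ 2 ^ (j+1) := Nat.pow_le_pow_right (by norm_num) hj
    have : 2 ^ (j+1) = 2 * 2 ^ j := by ring
    omega
  by_contra hge
  push_neg at hge
  unfold APred at hp
  rcases Nat.eq_zero_or_pos i with rfl | hipos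
  · rw [if_pos rfl] at hp
    rw [hsmall 0 (by omega)] at hp
    exact Bool.false_ne_true hp
  · rw [if_neg hipos.ne'] at hp
    rw [hsmall i (by omega), hsmall (i-1) (by omega)] at hp
    exact hp rfl

section Blk

variable {a b q n : ℕ} (hab : a < b) (hq : q < 2 ^ a) (hn : n = 2 ^ b - 2 ^ a + q)
include hab hq hn

lemma blk_mod : n % 2 ^ a = q := by
  have h2 : 2 ^ a ≤ 2 ^ b := Nat.pow_le_pow_right (by norm_num) hab.le
  have : n = 2 ^ a * (2 ^ (b - a) - 1) + q := by
    rw [Nat.mul_sub, mul_one, ← pow_add]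
    have : a + (b - a) = b := by omega
    rw [this]; omega
  rw [this, Nat.mul_add_mod, Nat.mod_eq_of_lt hq]

lemma blk_lt : n < 2 ^ b := by
  have h2 : 2 ^ a ≤ 2 ^ b := Nat.pow_le_pow_right (by norm_num) hab.le
  have h0 : 0 < 2 ^ a := by positivity
  omega

lemma blk_bit_lo {i : ℕ} (hi : i < a) : n.testBit i = q.testBit i := by
  have := blk_mod hab hq hn
  have h := Nat.testBit_mod_two_pow n a i
  rw [this] at h
  simp [hi] at h
  exact h.symm

lemma blk_bit_mid {i : ℕ} (hi1 : a ≤ i) (hi2 : i < b) : n.testBit i = true := by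
  have h2 : 2 ^ a ≤ 2 ^ i := Nat.pow_le_pow_right (by norm_num) hi1
  have h4 : 2 ^ i ≤ 2 ^ b := Nat.pow_le_pow_right (by norm_num) hi2.le
  have h3 : 2 ^ i * 2 ^ (b - i) = 2 ^ b := by rw [← pow_add]; congr 1; omega
  have h0 : 0 < 2 ^ i := by positivity
  have h0b : 0 < 2 ^ (b - i) := by positivity
  have hdiv : n / 2 ^ i = 2 ^ (b - i) - 1 := by
    have heq : n = 2 ^ i * (2 ^ (b - i) - 1) + (2 ^ i - 2 ^ a + q) := by
      rw [Nat.mul_sub, mul_one, h3]; omega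
    rw [heq, Nat.mul_add_div h0, Nat.div_eq_of_lt (by omega)]; omega
  have hev : 2 ^ (b - i) % 2 = 0 := by
    have hbi : b - i = (b - i - 1) + 1 := by omega
    rw [hbi, pow_succ, Nat.mul_mod_left]
  have hmod : n / 2 ^ i % 2 = 1 := by rw [hdiv]; omega
  rw [Nat.testBit_eq_decide_div_mod_eq, hmod]; simp

lemma blk_bit_hi {i : ℕ} (hi : b ≤ i) : n.testBit i = false :=
  Nat.testBit_eq_false_of_lt
    (lt_of_lt_of_le (blk_lt hab hq hn) (Nat.pow_le_pow_right (by norm_num) hi))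

end Blk

lemma V_eq_card (m : ℕ) : V m = (Aset m).card := by
  rw [V, Aset, Finset.card_filter, Finset.sum_range_succ', add_comm (bit m 0)]
  congr 1
  · apply Finset.sum_congr rfl
    intro k _
    simp [Nat.succ_ne_zero]
  · cases h : m.testBit 0 <;> simp [bit, h]


section Split

variable {a b q n : ℕ} (hab : a < b) (hq2 : 2 * q < 2 ^ a) (hn : n = 2 ^ b - 2 ^ a + q)
include hab hq2 hn

lemma Aset_split : Aset n = insert b (insert a (Aset q)) := by
  have hq : q < 2 ^ a := by omega
  have hsmall : ∀ j, a ≤ j + 1 → q.testBit j = false := by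
    intro j hj
    apply Nat.testBit_eq_false_of_lt
    have h1 : 2 ^ a ≤ 2 ^ (j+1) := Nat.pow_le_pow_right (by norm_num) hj
    have h2 : 2 ^ (j+1) = 2 * 2 ^ j := by ring
    omega
  have h2ab : 2 ^ a ≤ 2 ^ b := Nat.pow_le_pow_right (by norm_num) hab.le
  have hbn : b ≤ n := by
    have h1 : 2 ^ a ≤ 2 ^ (b-1) := Nat.pow_le_pow_right (by norm_num) (by omega)
    have h2 : b - 1 < 2 ^ (b-1) := Nat.lt_two_pow_self
    have h3 : 2 ^ b = 2 ^ (b-1) * 2 := by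
      have hb1 : b = (b-1) + 1 := by omega
      conv_lhs => rw [hb1, pow_succ]
    omega
  ext i
  rw [mem_Aset, Finset.mem_insert, Finset.mem_insert]
  constructor
  · rintro ⟨-, hp⟩
    rcases lt_trichotomy i a with hlt | rfl | hgt
    · right; right
      have hp' : APred q i := by
        unfold APred at hp ⊢
        rcases Nat.eq_zero_or_pos i with rfl | hipos
        · rw [if_pos rfl] at hp ⊢
          rw [← blk_bit_lo hab hq hn hlt]; exact hp
        · rw [if_neg hipos.ne'] at hp ⊢
          rw [← blk_bit_lo hab hq hn hlt, ← blk_bit_lo hab hq hn (by omega)]; exact hp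
      rw [mem_Aset]
      exact ⟨by have := APred_le hp'; omega, hp'⟩
    · right; left; rfl
    · left
      by_contra hne
      unfold APred at hp
      rw [if_neg (by omega : i ≠ 0)] at hp
      rcases lt_or_gt_of_ne hne with hib | hib
      · rw [blk_bit_mid hab hq hn (by omega) hib,
            blk_bit_mid hab hq hn (by omega) (by omega)] at hp
        exact hp rfl
      · rw [blk_bit_hi hab hq hn (by omega), blk_bit_hi hab hq hn (by omega)] at hp
        exact hp rfl
  · rintro (hib | hia | hi)
    · refine ⟨by omega, ?_⟩
      rw [hib]
      unfold APred
      rw [if_neg (by omega : b ≠ 0), blk_bit_hi hab hq hn le_rfl,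
          blk_bit_mid hab hq hn (by omega) (by omega)]
      simp
    · refine ⟨by omega, ?_⟩
      rw [hia]
      unfold APred
      rcases Nat.eq_zero_or_pos a with ha0 | hapos
      · rw [if_pos ha0]
        have := blk_bit_mid hab hq hn le_rfl (by omega : a < b)
        rwa [ha0] at this
      · rw [if_neg hapos.ne', blk_bit_mid hab hq hn le_rfl hab,
            blk_bit_lo hab hq hn (by omega), hsmall (a-1) (by omega)]
        simp
    · have hia : i < a := mem_Aset_lt hq2 hi
      rw [mem_Aset] at hi
      obtain ⟨-, hp⟩ := hi
      refine ⟨by omega, ?_⟩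
      unfold APred at hp ⊢
      rcases Nat.eq_zero_or_pos i with rfl | hipos
      · rw [if_pos rfl] at hp ⊢
        rw [blk_bit_lo hab hq hn hia]; exact hp
      · rw [if_neg hipos.ne'] at hp ⊢
        rw [blk_bit_lo hab hq hn hia, blk_bit_lo hab hq hn (by omega)]; exact hp

lemma b_not_mem : b ∉ insert a (Aset q) := by
  rw [Finset.mem_insert]
  rintro (rfl | hb)
  · omega
  · have := mem_Aset_lt hq2 hb; omega

lemma a_not_mem : a ∉ Aset q := fun ha => by have := mem_Aset_lt hq2 ha; omega

lemma V_split : V n = V q + 2 := by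
  rw [V_eq_card n, V_eq_card q, Aset_split hab hq2 hn,
      Finset.card_insert_of_notMem (b_not_mem hab hq2 hn),
      Finset.card_insert_of_notMem (a_not_mem hab hq2 hn)]

lemma S_split :
    S n = S q + ((2:ℝ) ^ a - q) / 2 ^ (a+1) + (n:ℝ) / 2 ^ (b+1) := by
  have hq : q < 2 ^ a := by omega
  have hab_b : alpha n b = (n : ℤ) := by
    rw [alpha_eq_mod, Nat.mod_eq_of_lt (blk_lt hab hq hn)]
    have : bit n b = 0 := by rw [bit, blk_bit_hi hab hq hn le_rfl]; rfl
    rw [this]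
    simp
  have hab_a : alpha n a = (2:ℤ) ^ a - q := by
    rw [alpha_eq_mod, blk_mod hab hq hn]
    have : bit n a = 1 := by rw [bit, blk_bit_mid hab hq hn le_rfl hab]; rfl
    rw [this]
    have hcast : (q:ℤ) < 2 ^ a := by exact_mod_cast hq
    rw [abs_sub_comm, abs_of_nonneg (by push_cast; linarith)]
    push_cast; ring
  rw [S, Aset_split hab hq2 hn, Finset.sum_insert (b_not_mem hab hq2 hn),
      Finset.sum_insert (a_not_mem hab hq2 hn), hab_b, hab_a]
  have hsum : ∑ i ∈ Aset q, (alpha n i : ℝ) / 2 ^ (i+1)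
      = ∑ i ∈ Aset q, (alpha q i : ℝ) / 2 ^ (i+1) := by
    apply Finset.sum_congr rfl
    intro i hi
    have hia : i < a := mem_Aset_lt hq2 hi
    have : alpha n i = alpha q i := by
      unfold alpha
      have h1 : ∀ k, k < a → bit n k = bit q k := by
        intro k hk
        rw [bit, bit, blk_bit_lo hab hq hn hk]
      rw [h1 i hia]
      congr 1
      congr 1
      apply Finset.sum_congr rfl
      intro k hk
      rw [Finset.mem_range] at hk
      rw [h1 k (by omega)]
    rw [this]
  rw [hsum, S]
  push_cast
  ring

end Split


lemma real_step (A B X Q n vq sq : ℝ)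
    (hA : 0 < A) (hX : 0 < X)
    (hAB : 2*A ≤ B) (hXA : 4*X ≤ A) (hXQ : X ≤ Q) (hQ0 : 0 ≤ Q) (hQA2 : 2*Q ≤ A)
    (hn : n = B - A + Q)
    (ih : vq/3 + (Q/(2*X) - 1/2)/6 ≤ sq) :
    (vq + 2)/3 + (n/B - 1/2)/6 ≤ sq + (A - Q)/(2*A) + n/(2*B) := by
  have hQA : Q ≤ A := by linarith
  have hB : 0 < B := by linarith
  have key1 : (A - Q)/B ≤ (A - Q)/(2*A) := by
    apply div_le_div_of_nonneg_left (by linarith) (by linarith) hAB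
  have key2 : Q/A ≤ Q/(4*X) := by
    apply div_le_div_of_nonneg_left hQ0 (by linarith) hXA
  have e2 : Q/(4*X) = (Q/(2*X))/2 := by ring
  have key3 : 1/2 ≤ Q/(2*X) := by
    rw [le_div_iff₀ (by linarith)]; linarith
  have e5 : (A - Q)/(2*A) = 1/2 - Q/(2*A) := by field_simp
  have e8 : Q/(2*A) = (Q/A)/2 := by ring
  have e6 : n/B = 1 - (A - Q)/B := by rw [hn]; field_simp; ring
  have e7 : n/(2*B) = (n/B)/2 := by ring
  linarith

lemma S_zero : S 0 = 0 := by
  have : Aset 0 = ∅ := by decide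
  simp [S, this]

lemma V_zero : V 0 = 0 := by simp [V, bit]

theorem aux_main : ∀ n : ℕ, 0 < n →
    (V n : ℝ)/3 + ((n : ℝ)/2^(n.log2 + 1) - 1/2)/6 ≤ S n := by
  intro n
  induction n using Nat.strong_induction_on with
  | _ n ih =>
  intro hn
  set b := n.log2 + 1 with hb
  have hnb : n < 2^b := Nat.lt_log2_self
  have hn2 : 2^(n.log2) ≤ n := Nat.log2_self_le hn.ne'
  have hbb : (2:ℕ)^b = 2^(n.log2) * 2 := by rw [hb, pow_succ]
  obtain ⟨a, q, hab, hq2, hn_eq⟩ :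
      ∃ a q, a < b ∧ 2*q < 2^a ∧ n = 2^b - 2^a + q := by
    set m := 2^b - 1 - n with hm
    by_cases hm0 : m = 0
    · exact ⟨0, 0, by omega, by norm_num, by simp; omega⟩
    · refine ⟨m.log2 + 1, 2^(m.log2+1) - 1 - m, ?_, ?_, ?_⟩
      · have h1 : m < 2^(n.log2) := by omega
        have := (Nat.log2_lt hm0).mpr h1
        omega
      · have h2 : 2^(m.log2) ≤ m := Nat.log2_self_le hm0
        have h3 : (2:ℕ)^(m.log2+1) = 2^(m.log2) * 2 := by rw [pow_succ]
        have h3' : 0 < (2:ℕ)^(m.log2) := by positivity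
        omega
      · have h4 : m < 2^(m.log2+1) := Nat.lt_log2_self
        have h5 : (2:ℕ)^(m.log2+1) ≤ 2^b := by
          apply Nat.pow_le_pow_right (by norm_num)
          have h1 : m < 2^(n.log2) := by omega
          have := (Nat.log2_lt hm0).mpr h1
          omega
        omega
  have hq : q < 2^a := by omega
  have h2ab : (2:ℕ)^a ≤ 2^b := Nat.pow_le_pow_right (by norm_num) hab.le
  have h2ab1 : (2:ℕ)^(a+1) ≤ 2^b := Nat.pow_le_pow_right (by norm_num) (by omega)
  have hS := S_split hab hq2 hn_eq
  have hV := V_split hab hq2 hn_eq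
  rw [hS, hV]
  have hp2 : ((2:ℝ))^(a+1) = 2 * 2^a := by rw [pow_succ]; ring
  have hp3 : ((2:ℝ))^(b+1) = 2 * 2^b := by rw [pow_succ]; ring
  have hnreal : (n:ℝ) = 2^b - 2^a + q := by
    rw [hn_eq]
    push_cast [h2ab]
    ring
  have hApos : (0:ℝ) < 2^a := by positivity
  have hBpos : (0:ℝ) < 2^b := by positivity
  have hABr : 2 * (2:ℝ)^a ≤ 2^b := by
    have := (Nat.cast_le (α := ℝ)).mpr h2ab1
    push_cast at this
    rw [pow_succ] at this
    linarith
  by_cases hq0 : q = 0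
  · subst hq0
    rw [S_zero, V_zero]
    have hx : (1:ℝ)/2 ≤ (n:ℝ)/2^b := by
      rw [div_le_div_iff₀ (by norm_num) hBpos]
      have h6 : (2:ℕ)^b ≤ 2 * n := by omega
      have := (Nat.cast_le (α := ℝ)).mpr h6
      push_cast at this
      linarith
    have h7 : ((2:ℝ)^a - (0:ℕ))/2^(a+1) = 1/2 := by
      rw [hp2]
      push_cast
      rw [sub_zero]
      field_simp
    rw [h7]
    push_cast
    rw [hp3]
    have e7 : (n:ℝ)/(2*2^b) = ((n:ℝ)/2^b)/2 := by ring
    rw [e7]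
    linarith
  · have hq1 : 0 < q := Nat.pos_of_ne_zero hq0
    have hqn : q < n := by omega
    have ihq := ih q hqn hq1
    have ha2 : 2 ≤ a := by
      by_contra hlt
      interval_cases a <;> omega
    have hlog : q.log2 + 2 ≤ a := by
      have h8 : q < 2^(a-1) := by
        have : (2:ℕ)^a = 2^(a-1) * 2 := by
          conv_lhs => rw [show a = (a-1)+1 by omega, pow_succ]
        omega
      have := (Nat.log2_lt hq0).mpr h8
      omega
    have hXA : (2:ℕ)^(q.log2 + 2) ≤ 2^a := Nat.pow_le_pow_right (by norm_num) hlog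
    have hXAr : 4 * (2:ℝ)^(q.log2) ≤ 2^a := by
      have := (Nat.cast_le (α := ℝ)).mpr hXA
      push_cast at this
      rw [pow_add] at this
      norm_num at this
      linarith
    have hXQr : (2:ℝ)^(q.log2) ≤ q := by
      exact_mod_cast (Nat.cast_le (α := ℝ)).mpr (Nat.log2_self_le hq0)
    have hQAr : 2 * (q:ℝ) ≤ 2^a := by
      have := (Nat.cast_le (α := ℝ)).mpr hq2.le
      push_cast at this
      linarith
    have hXpos : (0:ℝ) < 2^(q.log2) := by positivity
    have hq2r : ((2:ℝ))^(q.log2 + 1) = 2 * 2^(q.log2) := by rw [pow_succ]; ring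
    rw [hq2r] at ihq
    have key := real_step (2^a) (2^b) (2^(q.log2)) q n (V q) (S q)
      hApos hXpos hABr hXAr hXQr (by positivity) hQAr hnreal ihq
    push_cast
    rw [hp2, hp3]
    linarith


/-- `S(n) ≥ V(n)/3` for every positive integer `n`. -/
theorem S_ge_V_div_three (n : ℕ) (hn : 0 < n) : (V n : ℝ) / 3 ≤ S n := by
  have h := aux_main n hn
  have hBpos : (0:ℝ) < 2^(n.log2 + 1) := by positivity
  have hx : (1:ℝ)/2 ≤ (n:ℝ)/2^(n.log2+1) := by
    rw [div_le_div_iff₀ (by norm_num) hBpos]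
    have hn2 : 2^(n.log2) ≤ n := Nat.log2_self_le hn.ne'
    have h6 : (2:ℕ)^(n.log2+1) ≤ 2 * n := by
      rw [pow_succ]; omega
    have := (Nat.cast_le (α := ℝ)).mpr h6
    push_cast at this
    linarith
  linarith
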